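/- For u0(x) = 1/(1+x^2) and u1 = μ·u0'' - u0·u0', the function (x - i)^3 · u1(x) tends to -1/4 - iμ as x → i in ℂ; that is, u1 has a pole of order 3 at x = i with leading coefficient -1/4 - iμ. -/

import Mathlib

open Complex Filter

lemma d1 (x : ℂ) (hx : 1 + x ^ 2 ≠ 0) :
    HasDerivAt (fun x : ℂ => 1 / (1 + x ^ 2)) (-2 * x / (1 + x ^ 2) ^ 2) x := by
  have h : HasDerivAt (fun x : ℂ => 1 + x ^ 2) (2 * x) x := by
    simpa using (hasDerivAt_pow 2 x).const_add 1
  have := h.fun_inv hx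
  simp only [one_div]
  refine this.congr_deriv ?_
  ring

lemma d2 (x : ℂ) (hx : 1 + x ^ 2 ≠ 0) :
    HasDerivAt (fun x : ℂ => -2 * x / (1 + x ^ 2) ^ 2) ((6 * x ^ 2 - 2) / (1 + x ^ 2) ^ 3) x := by
  have h : HasDerivAt (fun x : ℂ => 1 + x ^ 2) (2 * x) x := by
    simpa using (hasDerivAt_pow 2 x).const_add 1
  have hnum : HasDerivAt (fun x : ℂ => -2 * x) (-2 : ℂ) x := by
    simpa using (hasDerivAt_id x).const_mul (-2 : ℂ)
  have hden : HasDerivAt (fun x : ℂ => (1 + x ^ 2) ^ 2) (2 * (1 + x ^ 2) * (2 * x)) x := by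
    simpa [mul_comm, mul_assoc] using (h.fun_pow 2)
  have hden' : (1 + x ^ 2) ^ 2 ≠ 0 := pow_ne_zero _ hx
  have := hnum.fun_div hden hden'
  refine this.congr_deriv ?_
  field_simp
  ring

/-- `u1 = μ·u0'' - u0·u0'` has a pole of order 3 at `x = i` with leading
coefficient `-1/4 - iμ`: `(x - i)^3 · u1(x) → -1/4 - iμ` as `x → i`. -/
theorem stmt_2 (μ : ℂ) (u0 u1 : ℂ → ℂ) (hu0 : ∀ x : ℂ, u0 x = 1 / (1 + x ^ 2))
    (hu1 : ∀ x : ℂ, u1 x = μ * deriv (deriv u0) x - u0 x * deriv u0 x) :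
    Tendsto (fun x => (x - I) ^ 3 * u1 x) (nhdsWithin I {I}ᶜ)
      (nhds (-1 / 4 - I * μ)) := by
  have hu0' : u0 = fun x : ℂ => 1 / (1 + x ^ 2) := funext hu0
  have hUopen : IsOpen {x : ℂ | 1 + x ^ 2 ≠ 0} := by
    have hc : Continuous fun x : ℂ => 1 + x ^ 2 := by continuity
    exact isOpen_compl_singleton.preimage hc
  have hd1 : ∀ x : ℂ, 1 + x ^ 2 ≠ 0 → deriv u0 x = -2 * x / (1 + x ^ 2) ^ 2 := by
    intro x hx
    rw [hu0']
    exact (d1 x hx).deriv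
  have hd2 : ∀ x : ℂ, 1 + x ^ 2 ≠ 0 →
      deriv (deriv u0) x = (6 * x ^ 2 - 2) / (1 + x ^ 2) ^ 3 := by
    intro x hx
    have hev : deriv u0 =ᶠ[nhds x] fun x => -2 * x / (1 + x ^ 2) ^ 2 := by
      filter_upwards [hUopen.mem_nhds hx] with y hy using hd1 y hy
    rw [hev.deriv_eq]
    exact (d2 x hx).deriv
  have hfac : ∀ x : ℂ, 1 + x ^ 2 = (x - I) * (x + I) := by
    intro x; linear_combination I_sq
  have hev : ∀ᶠ x in nhdsWithin I {I}ᶜ,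
      (x - I) ^ 3 * u1 x = (μ * (6 * x ^ 2 - 2) + 2 * x) / (x + I) ^ 3 := by
    have hne : ∀ᶠ x in nhdsWithin I {I}ᶜ, x ≠ -I := by
      apply eventually_nhdsWithin_of_eventually_nhds
      exact eventually_ne_nhds (by norm_num [Complex.ext_iff])
    filter_upwards [hne, eventually_mem_nhdsWithin] with x hxneg hxI
    have hxI' : x - I ≠ 0 := sub_ne_zero.mpr hxI
    have hxneg' : x + I ≠ 0 := by
      intro h; exact hxneg (by linear_combination h)
    have hx : 1 + x ^ 2 ≠ 0 := by
      rw [hfac]; exact mul_ne_zero hxI' hxneg'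
    rw [hu1, hd2 x hx, hd1 x hx, hu0 x, hfac]
    field_simp
    ring
  rw [tendsto_congr' hev]
  have hden : ((I : ℂ) + I) ^ 3 ≠ 0 := by
    apply pow_ne_zero; simp [Complex.ext_iff]
  have hc : ContinuousAt (fun x : ℂ => (μ * (6 * x ^ 2 - 2) + 2 * x) / (x + I) ^ 3) I := by
    apply ContinuousAt.div
    · fun_prop
    · fun_prop
    · exact hden
  have hval : (μ * (6 * I ^ 2 - 2) + 2 * I) / (I + I) ^ 3 = -1 / 4 - I * μ := by
    rw [div_eq_iff hden]
    linear_combination (6 * μ + 2 * I + 8 * μ * (I ^ 2 - 1)) * I_sq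
  rw [show (-1 / 4 - I * μ : ℂ) = (μ * (6 * I ^ 2 - 2) + 2 * I) / (I + I) ^ 3 from hval.symm]
  exact hc.tendsto.mono_left nhdsWithin_le_nhds
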